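/- Under conditions (A) and (C), the macroscopic fluxes satisfy the Onsager-type symmetry relation: for all θ, τ ∈ ℝ, ∂_θ Ψ̂(θ,τ) = ∂_τ Φ̂(θ,τ), where Φ̂(θ,τ) := Σ_{ω₁,ω₂∈Ω} φ(ω₁,ω₂) π_{θ,τ}(ω₁) π_{θ,τ}(ω₂) and Ψ̂(θ,τ) := Σ_{ω₁,ω₂∈Ω} ψ(ω₁,ω₂) π_{θ,τ}(ω₁) π_{θ,τ}(ω₂). -/

import Mathlib

open scoped BigOperators

noncomputable section

namespace Stmt0

variable {Ω : Type} [Fintype Ω]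

/-- Log-moment generating function `G(θ,τ)`. -/
def Gfun (π : Ω → ℝ) (ζ η : Ω → ℤ) (θ τ : ℝ) : ℝ :=
  Real.log (∑ ω : Ω, Real.exp (θ * (ζ ω : ℝ) + τ * (η ω : ℝ)) * π ω)

/-- The canonical (exponential-family) single-site measure `π_{θ,τ}`. -/
def piCan (π : Ω → ℝ) (ζ η : Ω → ℤ) (θ τ : ℝ) (ω : Ω) : ℝ :=
  π ω * Real.exp (θ * (ζ ω : ℝ) + τ * (η ω : ℝ) - Gfun π ζ η θ τ)

/-- Condition (A): the rates conserve `ζ` and `η`. -/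
def CondA (r : Ω → Ω → Ω → Ω → ℝ) (ζ η : Ω → ℤ) : Prop :=
  ∀ ω₁ ω₂ ω₁' ω₂', 0 < r ω₁ ω₂ ω₁' ω₂' →
    ζ ω₁ + ζ ω₂ = ζ ω₁' + ζ ω₂' ∧ η ω₁ + η ω₂ = η ω₁' + η ω₂'

/-- The quantity `Q(ω₁,ω₂)` appearing in condition (C). -/
def Qfun (π : Ω → ℝ) (r : Ω → Ω → Ω → Ω → ℝ) (ω₁ ω₂ : Ω) : ℝ :=
  ∑ ω₁' : Ω, ∑ ω₂' : Ω,
    (π ω₁' * π ω₂' / (π ω₁ * π ω₂) * r ω₁' ω₂' ω₁ ω₂ - r ω₁ ω₂ ω₁' ω₂')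

/-- Condition (C). -/
def CondC (π : Ω → ℝ) (r : Ω → Ω → Ω → Ω → ℝ) : Prop :=
  ∀ ω₁ ω₂ ω₃, Qfun π r ω₁ ω₂ + Qfun π r ω₂ ω₃ + Qfun π r ω₃ ω₁ = 0

/-- Microscopic flux of `ζ`. -/
def phiF (r : Ω → Ω → Ω → Ω → ℝ) (ζ : Ω → ℤ) (C₁ : ℝ) (ω₁ ω₂ : Ω) : ℝ :=
  (∑ ω₁' : Ω, ∑ ω₂' : Ω, r ω₁ ω₂ ω₁' ω₂' * ((ζ ω₂' : ℝ) - (ζ ω₂ : ℝ))) + C₁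

/-- Expectation of a two-site function under `π_{θ,τ} ⊗ π_{θ,τ}`. -/
def fluxHat (π : Ω → ℝ) (ζ η : Ω → ℤ) (ξ : Ω → Ω → ℝ) (θ τ : ℝ) : ℝ :=
  ∑ ω₁ : Ω, ∑ ω₂ : Ω, ξ ω₁ ω₂ * piCan π ζ η θ τ ω₁ * piCan π ζ η θ τ ω₂


/-- Partition function. -/
def Sfun (π : Ω → ℝ) (ζ η : Ω → ℤ) (θ τ : ℝ) : ℝ :=
  ∑ ω : Ω, Real.exp (θ * (ζ ω : ℝ) + τ * (η ω : ℝ)) * π ω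

lemma Sfun_pos [Nonempty Ω] (π : Ω → ℝ) (ζ η : Ω → ℤ) (θ τ : ℝ) (hπ : ∀ ω, 0 < π ω) :
    0 < Sfun π ζ η θ τ :=
  Finset.sum_pos (fun ω _ => mul_pos (Real.exp_pos _) (hπ ω)) Finset.univ_nonempty

lemma piCan_eq [Nonempty Ω] (π : Ω → ℝ) (ζ η : Ω → ℤ) (θ τ : ℝ) (hπ : ∀ ω, 0 < π ω) (ω : Ω) :
    piCan π ζ η θ τ ω
      = π ω * Real.exp (θ * (ζ ω : ℝ) + τ * (η ω : ℝ)) / Sfun π ζ η θ τ := by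
  have hS := Sfun_pos π ζ η θ τ hπ
  unfold Sfun at hS
  unfold piCan Gfun
  rw [Real.exp_sub, Real.exp_log hS]
  rw [mul_div_assoc]
  rfl

lemma piCan_pos [Nonempty Ω] (π : Ω → ℝ) (ζ η : Ω → ℤ) (θ τ : ℝ) (hπ : ∀ ω, 0 < π ω) (ω : Ω) :
    0 < piCan π ζ η θ τ ω := by
  rw [piCan_eq π ζ η θ τ hπ]
  have := Sfun_pos π ζ η θ τ hπ
  have := hπ ω
  positivity

lemma sum_piCan [Nonempty Ω] (π : Ω → ℝ) (ζ η : Ω → ℤ) (θ τ : ℝ) (hπ : ∀ ω, 0 < π ω) :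
    ∑ ω : Ω, piCan π ζ η θ τ ω = 1 := by
  have hS := Sfun_pos π ζ η θ τ hπ
  rw [Finset.sum_congr rfl fun ω _ => piCan_eq π ζ η θ τ hπ ω, ← Finset.sum_div,
    div_eq_one_iff_eq hS.ne']
  exact Finset.sum_congr rfl fun ω _ => by ring

lemma hasDerivAt_Sfun (π : Ω → ℝ) (ζ η : Ω → ℤ) (θ τ : ℝ) :
    HasDerivAt (fun a => Sfun π ζ η a τ)
      (∑ ω : Ω, Real.exp (θ * (ζ ω : ℝ) + τ * (η ω : ℝ)) * (ζ ω : ℝ) * π ω) θ := by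
  apply HasDerivAt.fun_sum
  intro ω _
  have h1 : HasDerivAt (fun a : ℝ => a * (ζ ω : ℝ) + τ * (η ω : ℝ)) ((ζ ω : ℝ)) θ :=
    (hasDerivAt_mul_const _).add_const _
  exact (h1.exp.mul_const (π ω))

lemma hasDerivAt_Gfun [Nonempty Ω] (π : Ω → ℝ) (ζ η : Ω → ℤ) (θ τ : ℝ) (hπ : ∀ ω, 0 < π ω) :
    HasDerivAt (fun a => Gfun π ζ η a τ)
      ((∑ ω : Ω, Real.exp (θ * (ζ ω : ℝ) + τ * (η ω : ℝ)) * (ζ ω : ℝ) * π ω)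
        / Sfun π ζ η θ τ) θ :=
  (hasDerivAt_Sfun π ζ η θ τ).log (Sfun_pos π ζ η θ τ hπ).ne'

/-- The mean of ζ under the canonical measure. -/
lemma mean_eq [Nonempty Ω] (π : Ω → ℝ) (ζ η : Ω → ℤ) (θ τ : ℝ) (hπ : ∀ ω, 0 < π ω) :
    (∑ ω : Ω, Real.exp (θ * (ζ ω : ℝ) + τ * (η ω : ℝ)) * (ζ ω : ℝ) * π ω) / Sfun π ζ η θ τ
      = ∑ ω : Ω, (ζ ω : ℝ) * piCan π ζ η θ τ ω := by
  rw [Finset.sum_div]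
  exact Finset.sum_congr rfl fun ω _ => by rw [piCan_eq π ζ η θ τ hπ]; ring

lemma hasDerivAt_piCan [Nonempty Ω] (π : Ω → ℝ) (ζ η : Ω → ℤ) (θ τ : ℝ) (hπ : ∀ ω, 0 < π ω)
    (ω : Ω) :
    HasDerivAt (fun a => piCan π ζ η a τ ω)
      (piCan π ζ η θ τ ω * ((ζ ω : ℝ) - ∑ x : Ω, (ζ x : ℝ) * piCan π ζ η θ τ x)) θ := by
  have h1 : HasDerivAt (fun a : ℝ => a * (ζ ω : ℝ) + τ * (η ω : ℝ) - Gfun π ζ η a τ)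
      ((ζ ω : ℝ) - ∑ x : Ω, (ζ x : ℝ) * piCan π ζ η θ τ x) θ := by
    rw [← mean_eq π ζ η θ τ hπ]
    exact ((hasDerivAt_mul_const _).add_const _).sub (hasDerivAt_Gfun π ζ η θ τ hπ)
  have h2 := h1.exp.const_mul (π ω)
  have he : π ω * (Real.exp (θ * (ζ ω : ℝ) + τ * (η ω : ℝ) - Gfun π ζ η θ τ) *
      ((ζ ω : ℝ) - ∑ x : Ω, (ζ x : ℝ) * piCan π ζ η θ τ x))
      = piCan π ζ η θ τ ω * ((ζ ω : ℝ) - ∑ x : Ω, (ζ x : ℝ) * piCan π ζ η θ τ x) := by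
    unfold piCan; ring
  exact he ▸ h2

lemma hasDerivAt_fluxHat [Nonempty Ω] (π : Ω → ℝ) (ζ η : Ω → ℤ) (ξ : Ω → Ω → ℝ) (θ τ : ℝ)
    (hπ : ∀ ω, 0 < π ω) :
    HasDerivAt (fun a => fluxHat π ζ η ξ a τ)
      (∑ ω₁ : Ω, ∑ ω₂ : Ω, ξ ω₁ ω₂ * piCan π ζ η θ τ ω₁ * piCan π ζ η θ τ ω₂ *
        (((ζ ω₁ : ℝ) - ∑ x : Ω, (ζ x : ℝ) * piCan π ζ η θ τ x)
          + ((ζ ω₂ : ℝ) - ∑ x : Ω, (ζ x : ℝ) * piCan π ζ η θ τ x))) θ := by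
  apply HasDerivAt.fun_sum
  intro ω₁ _
  apply HasDerivAt.fun_sum
  intro ω₂ _
  set M := ∑ x : Ω, (ζ x : ℝ) * piCan π ζ η θ τ x with hM
  have h := (((hasDerivAt_piCan π ζ η θ τ hπ ω₁).const_mul (ξ ω₁ ω₂)).mul
    (hasDerivAt_piCan π ζ η θ τ hπ ω₂))
  have he : ξ ω₁ ω₂ * (piCan π ζ η θ τ ω₁ * ((ζ ω₁ : ℝ) - M)) * piCan π ζ η θ τ ω₂
      + ξ ω₁ ω₂ * piCan π ζ η θ τ ω₁ * (piCan π ζ η θ τ ω₂ * ((ζ ω₂ : ℝ) - M))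
      = ξ ω₁ ω₂ * piCan π ζ η θ τ ω₁ * piCan π ζ η θ τ ω₂ *
        (((ζ ω₁ : ℝ) - M) + ((ζ ω₂ : ℝ) - M)) := by ring
  exact he ▸ h

/-- Symmetry of the construction under swapping `(ζ,θ) ↔ (η,τ)`. -/
lemma Gfun_swap (π : Ω → ℝ) (ζ η : Ω → ℤ) (θ τ : ℝ) :
    Gfun π η ζ τ θ = Gfun π ζ η θ τ := by
  unfold Gfun
  congr 1
  exact Finset.sum_congr rfl fun ω _ => by rw [add_comm]

lemma piCan_swap (π : Ω → ℝ) (ζ η : Ω → ℤ) (θ τ : ℝ) :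
    piCan π η ζ τ θ = piCan π ζ η θ τ := by
  funext ω
  unfold piCan
  rw [Gfun_swap, add_comm (τ * (η ω : ℝ))]

lemma fluxHat_swap (π : Ω → ℝ) (ζ η : Ω → ℤ) (ξ : Ω → Ω → ℝ) (θ τ : ℝ) :
    fluxHat π ζ η ξ θ τ = fluxHat π η ζ ξ τ θ := by
  unfold fluxHat
  rw [piCan_swap]


lemma key_alg [Nonempty Ω] (r : Ω → Ω → Ω → Ω → ℝ) (π p : Ω → ℝ) (ζ η : Ω → ℤ)
    (hr : ∀ ω₁ ω₂ ω₁' ω₂', 0 ≤ r ω₁ ω₂ ω₁' ω₂') (hπ : ∀ ω, 0 < π ω)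
    (hA : CondA r ζ η) (hC : CondC π r)
    (hratio : ∀ x₁ x₂ y₁ y₂, 0 < r x₁ x₂ y₁ y₂ →
      p x₁ * p x₂ * (π y₁ * π y₂) = p y₁ * p y₂ * (π x₁ * π x₂))
    (hp1 : ∑ x : Ω, p x = 1) (m n : ℝ)
    (hm : ∑ x : Ω, ((ζ x : ℝ) - m) * p x = 0) (hn : ∑ x : Ω, ((η x : ℝ) - n) * p x = 0)
    (C₁ C₂ : ℝ) :
    ∑ x₁ : Ω, ∑ x₂ : Ω, phiF r η C₂ x₁ x₂ * p x₁ * p x₂ * (((ζ x₁:ℝ) - m) + ((ζ x₂:ℝ) - m))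
      = ∑ x₁ : Ω, ∑ x₂ : Ω,
          phiF r ζ C₁ x₁ x₂ * p x₁ * p x₂ * (((η x₁:ℝ) - n) + ((η x₂:ℝ) - n)) := by
  -- the zero-mean trick for constants
  have hzero : ∀ (c : Ω → ℝ), (∑ x : Ω, c x * p x = 0) →
      ∑ x₁ : Ω, ∑ x₂ : Ω, p x₁ * p x₂ * (c x₁ + c x₂) = 0 := by
    intro c h0
    have inner : ∀ x₁, ∑ x₂ : Ω, p x₁ * p x₂ * (c x₁ + c x₂) = c x₁ * p x₁ := by
      intro x₁
      have : ∑ x₂ : Ω, p x₁ * p x₂ * (c x₁ + c x₂)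
          = p x₁ * c x₁ * (∑ x₂ : Ω, p x₂) + p x₁ * (∑ x₂ : Ω, c x₂ * p x₂) := by
        rw [Finset.mul_sum, Finset.mul_sum, ← Finset.sum_add_distrib]
        exact Finset.sum_congr rfl fun x₂ _ => by ring
      rw [this, hp1, h0]; ring
    rw [Finset.sum_congr rfl fun x₁ _ => inner x₁, h0]
  -- expansion of the flux sums
  have expand : ∀ (g : Ω → ℤ) (C : ℝ) (c : Ω → ℝ), (∑ x : Ω, c x * p x = 0) →
      ∑ x₁ : Ω, ∑ x₂ : Ω, phiF r g C x₁ x₂ * p x₁ * p x₂ * (c x₁ + c x₂)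
        = ∑ x₁ : Ω, ∑ x₂ : Ω, ∑ y₁ : Ω, ∑ y₂ : Ω,
            r x₁ x₂ y₁ y₂ * (p x₁ * p x₂) * (((g y₂:ℝ) - (g x₂:ℝ)) * (c x₁ + c x₂)) := by
    intro g C c h0
    have hterm : ∀ x₁ x₂, phiF r g C x₁ x₂ * p x₁ * p x₂ * (c x₁ + c x₂)
        = (∑ y₁ : Ω, ∑ y₂ : Ω,
            r x₁ x₂ y₁ y₂ * (p x₁ * p x₂) * (((g y₂:ℝ) - (g x₂:ℝ)) * (c x₁ + c x₂)))
          + C * (p x₁ * p x₂ * (c x₁ + c x₂)) := by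
      intro x₁ x₂
      simp only [phiF, add_mul, Finset.sum_mul]
      congr 1
      · exact Finset.sum_congr rfl fun y₁ _ => Finset.sum_congr rfl fun y₂ _ => by ring
      · ring
    calc ∑ x₁ : Ω, ∑ x₂ : Ω, phiF r g C x₁ x₂ * p x₁ * p x₂ * (c x₁ + c x₂)
        = (∑ x₁ : Ω, ∑ x₂ : Ω, ∑ y₁ : Ω, ∑ y₂ : Ω,
            r x₁ x₂ y₁ y₂ * (p x₁ * p x₂) * (((g y₂:ℝ) - (g x₂:ℝ)) * (c x₁ + c x₂)))
          + C * ∑ x₁ : Ω, ∑ x₂ : Ω, p x₁ * p x₂ * (c x₁ + c x₂) := by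
          rw [Finset.mul_sum, ← Finset.sum_add_distrib]
          refine Finset.sum_congr rfl fun x₁ _ => ?_
          rw [Finset.mul_sum, ← Finset.sum_add_distrib]
          exact Finset.sum_congr rfl fun x₂ _ => hterm x₁ x₂
      _ = _ := by rw [hzero c h0, mul_zero, add_zero]
  rw [expand η C₂ (fun x => (ζ x : ℝ) - m) hm, expand ζ C₁ (fun x => (η x : ℝ) - n) hn]
  -- now everything lives on pairs
  rw [show (∑ x₁ : Ω, ∑ x₂ : Ω, ∑ y₁ : Ω, ∑ y₂ : Ω,
        r x₁ x₂ y₁ y₂ * (p x₁ * p x₂) *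
          (((η y₂:ℝ) - (η x₂:ℝ)) * (((ζ x₁:ℝ) - m) + ((ζ x₂:ℝ) - m))))
      = ∑ u : Ω × Ω, ∑ v : Ω × Ω,
          r u.1 u.2 v.1 v.2 * (p u.1 * p u.2) *
            (((η v.2:ℝ) - (η u.2:ℝ)) * (((ζ u.1:ℝ) - m) + ((ζ u.2:ℝ) - m))) from by
      simp only [Fintype.sum_prod_type]]
  rw [show (∑ x₁ : Ω, ∑ x₂ : Ω, ∑ y₁ : Ω, ∑ y₂ : Ω,
        r x₁ x₂ y₁ y₂ * (p x₁ * p x₂) *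
          (((ζ y₂:ℝ) - (ζ x₂:ℝ)) * (((η x₁:ℝ) - n) + ((η x₂:ℝ) - n))))
      = ∑ u : Ω × Ω, ∑ v : Ω × Ω,
          r u.1 u.2 v.1 v.2 * (p u.1 * p u.2) *
            (((ζ v.2:ℝ) - (ζ u.2:ℝ)) * (((η u.1:ℝ) - n) + ((η u.2:ℝ) - n))) from by
      simp only [Fintype.sum_prod_type]]
  rw [← sub_eq_zero]
  simp only [← Finset.sum_sub_distrib]
  have hFsplit : ∀ u v : Ω × Ω,
      r u.1 u.2 v.1 v.2 * (p u.1 * p u.2) *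
          (((η v.2:ℝ) - (η u.2:ℝ)) * (((ζ u.1:ℝ) - m) + ((ζ u.2:ℝ) - m)))
        - r u.1 u.2 v.1 v.2 * (p u.1 * p u.2) *
          (((ζ v.2:ℝ) - (ζ u.2:ℝ)) * (((η u.1:ℝ) - n) + ((η u.2:ℝ) - n)))
      = r u.1 u.2 v.1 v.2 * (p u.1 * p u.2) *
          ((((ζ v.1:ℝ) - m) * ((η v.2:ℝ) - n) - ((ζ v.2:ℝ) - m) * ((η v.1:ℝ) - n))
           - (((ζ u.1:ℝ) - m) * ((η u.2:ℝ) - n) - ((ζ u.2:ℝ) - m) * ((η u.1:ℝ) - n))) := by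
    intro u v
    rcases eq_or_lt_of_le (hr u.1 u.2 v.1 v.2) with h | h
    · rw [← h]; ring
    · obtain ⟨h₁, h₂⟩ := hA _ _ _ _ h
      have e₁ : (ζ u.1:ℝ) + (ζ u.2:ℝ) = (ζ v.1:ℝ) + (ζ v.2:ℝ) := by exact_mod_cast h₁
      have e₂ : (η u.1:ℝ) + (η u.2:ℝ) = (η v.1:ℝ) + (η v.2:ℝ) := by exact_mod_cast h₂
      linear_combination (r u.1 u.2 v.1 v.2 * (p u.1 * p u.2) * ((η v.2:ℝ) - n)) * e₁
        - (r u.1 u.2 v.1 v.2 * (p u.1 * p u.2) * ((ζ v.2:ℝ) - m)) * e₂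
  rw [Finset.sum_congr rfl fun u _ => Finset.sum_congr rfl fun v _ => hFsplit u v]
  -- abbreviate the antisymmetric two-point function
  set F : Ω × Ω → ℝ := fun w =>
    ((ζ w.1:ℝ) - m) * ((η w.2:ℝ) - n) - ((ζ w.2:ℝ) - m) * ((η w.1:ℝ) - n) with hF
  have hQpair : ∀ w : Ω × Ω, Qfun π r w.1 w.2
      = ∑ u : Ω × Ω, (π u.1 * π u.2 / (π w.1 * π w.2) * r u.1 u.2 w.1 w.2
          - r w.1 w.2 u.1 u.2) := by
    intro w
    unfold Qfun
    simp only [Fintype.sum_prod_type]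
  have hterm1 : ∀ u v : Ω × Ω, r u.1 u.2 v.1 v.2 * (p u.1 * p u.2) * F v
      = p v.1 * p v.2 * F v *
          (π u.1 * π u.2 / (π v.1 * π v.2) * r u.1 u.2 v.1 v.2) := by
    intro u v
    rcases eq_or_lt_of_le (hr u.1 u.2 v.1 v.2) with h | h
    · rw [← h]; ring
    · have hx := hratio _ _ _ _ h
      have h1 : π v.1 ≠ 0 := (hπ _).ne'
      have h2 : π v.2 ≠ 0 := (hπ _).ne'
      field_simp
      linear_combination (F v) * hx
  have step1 : ∑ u : Ω × Ω, ∑ v : Ω × Ω,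
        r u.1 u.2 v.1 v.2 * (p u.1 * p u.2) * (F v - F u)
      = ∑ w : Ω × Ω, p w.1 * p w.2 * F w * Qfun π r w.1 w.2 := by
    calc ∑ u : Ω × Ω, ∑ v : Ω × Ω,
          r u.1 u.2 v.1 v.2 * (p u.1 * p u.2) * (F v - F u)
        = (∑ u : Ω × Ω, ∑ v : Ω × Ω, r u.1 u.2 v.1 v.2 * (p u.1 * p u.2) * F v)
          - (∑ u : Ω × Ω, ∑ v : Ω × Ω, r u.1 u.2 v.1 v.2 * (p u.1 * p u.2) * F u) := by
          simp only [mul_sub, Finset.sum_sub_distrib]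
      _ = (∑ v : Ω × Ω, p v.1 * p v.2 * F v *
              (∑ u : Ω × Ω, π u.1 * π u.2 / (π v.1 * π v.2) * r u.1 u.2 v.1 v.2))
          - (∑ u : Ω × Ω, p u.1 * p u.2 * F u * (∑ v : Ω × Ω, r u.1 u.2 v.1 v.2)) := by
          congr 1
          · rw [Finset.sum_comm]
            refine Finset.sum_congr rfl fun v _ => ?_
            rw [Finset.mul_sum]
            exact Finset.sum_congr rfl fun u _ => hterm1 u v
          · refine Finset.sum_congr rfl fun u _ => ?_
            rw [Finset.mul_sum]
            exact Finset.sum_congr rfl fun v _ => by ring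
      _ = ∑ w : Ω × Ω, p w.1 * p w.2 * F w * Qfun π r w.1 w.2 := by
          rw [← Finset.sum_sub_distrib]
          refine Finset.sum_congr rfl fun w _ => ?_
          rw [hQpair w, ← mul_sub, ← Finset.sum_sub_distrib]
  rw [step1]
  -- the cocycle structure of Q
  obtain ⟨z₀⟩ := (inferInstance : Nonempty Ω)
  have hQxx : ∀ x, Qfun π r x x = 0 := fun x => by have := hC x x x; linarith
  obtain ⟨q, hq⟩ : ∃ q : Ω → ℝ, ∀ x y, Qfun π r x y = q x - q y := by
    refine ⟨fun x => Qfun π r x z₀, fun x y => ?_⟩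
    have h1 := hC x y z₀
    have h2 := hC x z₀ x
    have h3 := hQxx x
    linarith
  simp only [hq]
  -- final factorization using zero-mean of a and b
  have sum4 : ∀ (f g h k : Ω → ℝ), ∑ y : Ω, (f y - g y - h y + k y)
      = (∑ y : Ω, f y) - (∑ y : Ω, g y) - (∑ y : Ω, h y) + (∑ y : Ω, k y) := by
    intro f g h k
    simp [Finset.sum_add_distrib, Finset.sum_sub_distrib]
  rw [show (∑ w : Ω × Ω, p w.1 * p w.2 * F w * (q w.1 - q w.2))
      = ∑ x : Ω, ∑ y : Ω, p x * p y *
          ((((ζ x:ℝ) - m) * ((η y:ℝ) - n) - ((ζ y:ℝ) - m) * ((η x:ℝ) - n)))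
          * (q x - q y) from by simp only [hF, Fintype.sum_prod_type]]
  have inner : ∀ x : Ω, (∑ y : Ω, p x * p y *
          ((((ζ x:ℝ) - m) * ((η y:ℝ) - n) - ((ζ y:ℝ) - m) * ((η x:ℝ) - n)))
          * (q x - q y))
      = - (((ζ x:ℝ) - m) * p x) * (∑ y : Ω, ((η y:ℝ) - n) * p y * q y)
        + (((η x:ℝ) - n) * p x) * (∑ y : Ω, ((ζ y:ℝ) - m) * p y * q y) := by
    intro x
    calc (∑ y : Ω, p x * p y *
          ((((ζ x:ℝ) - m) * ((η y:ℝ) - n) - ((ζ y:ℝ) - m) * ((η x:ℝ) - n)))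
          * (q x - q y))
        = ∑ y : Ω, ((p x * ((ζ x:ℝ) - m) * q x) * (((η y:ℝ) - n) * p y)
            - (p x * ((η x:ℝ) - n) * q x) * (((ζ y:ℝ) - m) * p y)
            - (p x * ((ζ x:ℝ) - m)) * (((η y:ℝ) - n) * p y * q y)
            + (p x * ((η x:ℝ) - n)) * (((ζ y:ℝ) - m) * p y * q y)) :=
          Finset.sum_congr rfl fun y _ => by ring
      _ = (p x * ((ζ x:ℝ) - m) * q x) * (∑ y : Ω, ((η y:ℝ) - n) * p y)
            - (p x * ((η x:ℝ) - n) * q x) * (∑ y : Ω, ((ζ y:ℝ) - m) * p y)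
            - (p x * ((ζ x:ℝ) - m)) * (∑ y : Ω, ((η y:ℝ) - n) * p y * q y)
            + (p x * ((η x:ℝ) - n)) * (∑ y : Ω, ((ζ y:ℝ) - m) * p y * q y) := by
          rw [sum4, ← Finset.mul_sum, ← Finset.mul_sum, ← Finset.mul_sum, ← Finset.mul_sum]
      _ = _ := by rw [hm, hn]; ring
  rw [Finset.sum_congr rfl fun x _ => inner x]
  rw [Finset.sum_add_distrib]
  rw [show (∑ x : Ω, - (((ζ x:ℝ) - m) * p x) * (∑ y : Ω, ((η y:ℝ) - n) * p y * q y))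
      = - (∑ x : Ω, ((ζ x:ℝ) - m) * p x) * (∑ y : Ω, ((η y:ℝ) - n) * p y * q y) from by
    rw [← Finset.sum_mul, ← Finset.sum_neg_distrib]]
  rw [show (∑ x : Ω, (((η x:ℝ) - n) * p x) * (∑ y : Ω, ((ζ y:ℝ) - m) * p y * q y))
      = (∑ x : Ω, ((η x:ℝ) - n) * p x) * (∑ y : Ω, ((ζ y:ℝ) - m) * p y * q y) from by
    rw [← Finset.sum_mul]]
  rw [hm, hn]
  ring

/-- **Onsager-type symmetry relation** (Lemma 1 of the paper):
under conditions (A) and (C), `∂_θ Ψ̂ = ∂_τ Φ̂`. -/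
theorem onsager_symmetry
    (ζ η : Ω → ℤ) (r : Ω → Ω → Ω → Ω → ℝ) (π : Ω → ℝ)
    (hr : ∀ ω₁ ω₂ ω₁' ω₂', 0 ≤ r ω₁ ω₂ ω₁' ω₂')
    (hπpos : ∀ ω, 0 < π ω) (hπsum : ∑ ω : Ω, π ω = 1)
    (hli : LinearIndependent ℝ
      ![(fun _ => (1 : ℝ) : Ω → ℝ), fun ω => (ζ ω : ℝ), fun ω => (η ω : ℝ)])
    (hA : CondA r ζ η) (hC : CondC π r) (C₁ C₂ : ℝ) (θ τ : ℝ) :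
    deriv (fun a => fluxHat π ζ η (phiF r η C₂) a τ) θ =
      deriv (fun b => fluxHat π ζ η (phiF r ζ C₁) θ b) τ := by
  have hne : Nonempty Ω := by
    rcases isEmpty_or_nonempty Ω with h | h
    · simp at hπsum
    · exact h
  set p : Ω → ℝ := piCan π ζ η θ τ with hp
  have hp1 : ∑ x : Ω, p x = 1 := sum_piCan π ζ η θ τ hπpos
  have hmean : ∀ (M : ℝ), M = ∑ x : Ω, ((fun x => M) x) → True := fun _ _ => trivial
  have hcenter : ∀ (c : Ω → ℝ),
      ∑ x : Ω, (c x - ∑ y : Ω, c y * p y) * p x = 0 := by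
    intro c
    calc ∑ x : Ω, (c x - ∑ y : Ω, c y * p y) * p x
        = (∑ x : Ω, c x * p x) - (∑ y : Ω, c y * p y) * ∑ x : Ω, p x := by
          rw [Finset.mul_sum, ← Finset.sum_sub_distrib]
          exact Finset.sum_congr rfl fun x _ => by ring
      _ = 0 := by rw [hp1]; ring
  have hratio : ∀ x₁ x₂ y₁ y₂, 0 < r x₁ x₂ y₁ y₂ →
      p x₁ * p x₂ * (π y₁ * π y₂) = p y₁ * p y₂ * (π x₁ * π x₂) := by
    intro x₁ x₂ y₁ y₂ h
    obtain ⟨h₁, h₂⟩ := hA _ _ _ _ h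
    have e₁ : (ζ x₁:ℝ) + (ζ x₂:ℝ) = (ζ y₁:ℝ) + (ζ y₂:ℝ) := by exact_mod_cast h₁
    have e₂ : (η x₁:ℝ) + (η x₂:ℝ) = (η y₁:ℝ) + (η y₂:ℝ) := by exact_mod_cast h₂
    have hexp : Real.exp (θ * (ζ x₁:ℝ) + τ * (η x₁:ℝ)) *
          Real.exp (θ * (ζ x₂:ℝ) + τ * (η x₂:ℝ))
        = Real.exp (θ * (ζ y₁:ℝ) + τ * (η y₁:ℝ)) *
          Real.exp (θ * (ζ y₂:ℝ) + τ * (η y₂:ℝ)) := by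
      rw [← Real.exp_add, ← Real.exp_add]
      congr 1
      linear_combination θ * e₁ + τ * e₂
    have hS := Sfun_pos π ζ η θ τ hπpos
    simp only [hp, piCan_eq π ζ η θ τ hπpos]
    field_simp
    linear_combination (π x₁ * π x₂ * (π y₁ * π y₂)) * hexp
  have h1 := (hasDerivAt_fluxHat π ζ η (phiF r η C₂) θ τ hπpos).deriv
  have hswapfun : (fun b => fluxHat π ζ η (phiF r ζ C₁) θ b)
      = fun b => fluxHat π η ζ (phiF r ζ C₁) b θ :=
    funext fun b => fluxHat_swap π ζ η (phiF r ζ C₁) θ b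
  have h2 := (hasDerivAt_fluxHat π η ζ (phiF r ζ C₁) τ θ hπpos).deriv
  rw [piCan_swap] at h2
  rw [h1, hswapfun, h2]
  exact key_alg r π p ζ η hr hπpos hA hC hratio hp1 _ _
    (hcenter fun x => (ζ x : ℝ)) (hcenter fun x => (η x : ℝ)) C₁ C₂


end Stmt0
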